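/- Let e: ℝⁿ → ℝⁿ, f: ℝⁿ×ℝᵐ → ℝⁿ, g: ℝⁿ×ℝᵐ → ℝᵖ, let P be an n×n symmetric positive-definite matrix, and let μ > 0. If the stability constraint |f(x₁,u) − f(x₂,u)|²_{P⁻¹} − 2(x₁−x₂)'(e(x₁)−e(x₂)) + |x₁−x₂|²_{P+μI} + |g(x₁,u)−g(x₂,u)|² ≤ 0 holds for all x₁, x₂ ∈ ℝⁿ and u ∈ ℝᵐ, then the incremental dissipation inequality −|e(x₁)−e(x₂)|²_{P⁻¹} + |f(x₁,u)−f(x₂,u)|²_{P⁻¹} + μ|x₁−x₂|² + |g(x₁,u)−g(x₂,u)|² ≤ 0 also holds for all x₁, x₂ ∈ ℝⁿ and u ∈ ℝᵐ. -/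

import Mathlib

open Matrix

lemma key_ineq {n : ℕ} {P : Matrix (Fin n) (Fin n) ℝ} (hP : P.PosDef) (b c : Fin n → ℝ) :
    -(c ⬝ᵥ (P⁻¹ *ᵥ c)) ≤ b ⬝ᵥ (P *ᵥ b) - 2 * (b ⬝ᵥ c) := by
  have hdet : IsUnit P.det := isUnit_iff_ne_zero.mpr hP.det_pos.ne'
  have hPP : P * P⁻¹ = 1 := mul_nonsing_inv _ hdet
  have hsym : Pᵀ = P := hP.isHermitian
  set d := b - P⁻¹ *ᵥ c with hd
  have h0 : 0 ≤ d ⬝ᵥ (P *ᵥ d) := by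
    have := hP.posSemidef.dotProduct_mulVec_nonneg d
    simpa using this
  have hPc : P *ᵥ (P⁻¹ *ᵥ c) = c := by
    rw [mulVec_mulVec, hPP, one_mulVec]
  have h1 : (P⁻¹ *ᵥ c) ⬝ᵥ (P *ᵥ b) = c ⬝ᵥ b := by
    rw [dotProduct_mulVec, ← mulVec_transpose, hsym, hPc]
  have h2 : d ⬝ᵥ (P *ᵥ d) = b ⬝ᵥ (P *ᵥ b) - b ⬝ᵥ c - c ⬝ᵥ b + (P⁻¹ *ᵥ c) ⬝ᵥ c := by
    rw [hd, mulVec_sub, sub_dotProduct, dotProduct_sub, dotProduct_sub, hPc, h1]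
    ring
  have h3 : (P⁻¹ *ᵥ c) ⬝ᵥ c = c ⬝ᵥ (P⁻¹ *ᵥ c) := dotProduct_comm _ _
  have h4 : b ⬝ᵥ c = c ⬝ᵥ b := dotProduct_comm _ _
  rw [h2, h3, h4] at h0; linarith

theorem stmt3 {n m p : ℕ}
    (e : (Fin n → ℝ) → (Fin n → ℝ))
    (f : (Fin n → ℝ) → (Fin m → ℝ) → (Fin n → ℝ))
    (g : (Fin n → ℝ) → (Fin m → ℝ) → (Fin p → ℝ))
    (P : Matrix (Fin n) (Fin n) ℝ) (hP : P.PosDef) (μ : ℝ) (hμ : 0 < μ)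
    (hstab : ∀ (x₁ x₂ : Fin n → ℝ) (u : Fin m → ℝ),
      (f x₁ u - f x₂ u) ⬝ᵥ (P⁻¹ *ᵥ (f x₁ u - f x₂ u))
        - 2 * ((x₁ - x₂) ⬝ᵥ (e x₁ - e x₂))
        + (x₁ - x₂) ⬝ᵥ ((P + μ • (1 : Matrix (Fin n) (Fin n) ℝ)) *ᵥ (x₁ - x₂))
        + (g x₁ u - g x₂ u) ⬝ᵥ (g x₁ u - g x₂ u) ≤ 0) :
    ∀ (x₁ x₂ : Fin n → ℝ) (u : Fin m → ℝ),
      -((e x₁ - e x₂) ⬝ᵥ (P⁻¹ *ᵥ (e x₁ - e x₂)))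
        + (f x₁ u - f x₂ u) ⬝ᵥ (P⁻¹ *ᵥ (f x₁ u - f x₂ u))
        + μ * ((x₁ - x₂) ⬝ᵥ (x₁ - x₂))
        + (g x₁ u - g x₂ u) ⬝ᵥ (g x₁ u - g x₂ u) ≤ 0 := by
  intro x₁ x₂ u
  have hs := hstab x₁ x₂ u
  have hk := key_ineq hP (x₁ - x₂) (e x₁ - e x₂)
  have hexp : (x₁ - x₂) ⬝ᵥ ((P + μ • (1 : Matrix (Fin n) (Fin n) ℝ)) *ᵥ (x₁ - x₂))
      = (x₁ - x₂) ⬝ᵥ (P *ᵥ (x₁ - x₂)) + μ * ((x₁ - x₂) ⬝ᵥ (x₁ - x₂)) := by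
    rw [add_mulVec, dotProduct_add, smul_mulVec, one_mulVec, dotProduct_smul]
    simp [smul_eq_mul]
  rw [hexp] at hs
  linarith
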